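/- For all complex numbers q, z with 0 < |q| < 1 and z ≠ 0, ∏_{m=1}^∞ (1 − q^{2m})(1 + q^{2m−1} z²)(1 + q^{2m−1} z^{−2}) = ∑_{n ∈ ℤ} q^{n²} z^{2n} (the Jacobi triple product identity). -/

import Mathlib

/- A self-contained proof of the Jacobi triple product identity, via the finite
(Gaussian-binomial) identity and a dominated-convergence (Tannery) limit argument. -/

set_option maxHeartbeats 1000000
set_option linter.unusedSectionVars false
set_option linter.unreachableTactic false
set_option linter.unusedTactic false

open Finset Filter Topology

namespace JTP

section A
/-- `(Q;Q)_N` with `Q = q^2`: the product `∏_{i=1}^N (1 - q^{2i})`. -/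
noncomputable def qp (q : ℂ) (N : ℕ) : ℂ := ∏ i ∈ Finset.range N, (1 - q ^ (2 * i + 2))

/-- Gaussian binomial `[m choose k]_{q^2}`, as a complex number, `0` outside `0 ≤ k ≤ m`. -/
noncomputable def gb (q : ℂ) (m : ℕ) (k : ℤ) : ℂ :=
  if 0 ≤ k ∧ k ≤ m then qp q m / (qp q k.toNat * qp q (m - k.toNat)) else 0

variable {q : ℂ} (hq : ‖q‖ < 1)

section basic
include hq

lemma one_sub_pow_ne (j : ℕ) (hj : 1 ≤ j) : (1 : ℂ) - q ^ j ≠ 0 := by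
  have : ‖q ^ j‖ < 1 := by
    rw [norm_pow]
    calc ‖q‖ ^ j ≤ ‖q‖ ^ 1 := pow_le_pow_of_le_one (norm_nonneg q) hq.le hj
    _ = ‖q‖ := pow_one _
    _ < 1 := hq
  intro h
  rw [sub_eq_zero] at h
  rw [← h] at this
  simp at this

lemma qp_ne_zero (N : ℕ) : qp q N ≠ 0 := by
  refine Finset.prod_ne_zero_iff.2 fun i _ => one_sub_pow_ne hq (2 * i + 2) (by omega)

end basic

lemma qp_succ (q : ℂ) (N : ℕ) : qp q (N + 1) = qp q N * (1 - q ^ (2 * N + 2)) :=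
  Finset.prod_range_succ _ _

include hq in
lemma gb_zero (m : ℕ) : gb q m 0 = 1 := by
  simp [gb, qp]
  exact qp_ne_zero hq m

lemma gb_of_neg (q : ℂ) (m : ℕ) {k : ℤ} (hk : k < 0) : gb q m k = 0 := by
  rw [gb, if_neg]; omega

lemma gb_of_gt (q : ℂ) (m : ℕ) {k : ℤ} (hk : (m : ℤ) < k) : gb q m k = 0 := by
  rw [gb, if_neg]; omega

include hq in
lemma gb_self (m : ℕ) : gb q m m = 1 := by
  have h : ((m : ℤ)).toNat = m := by omega
  rw [gb, if_pos (by omega), h]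
  simp [qp]
  exact qp_ne_zero hq m

end A

section B
variable {q : ℂ} (hq : ‖q‖ < 1) (hq0 : q ≠ 0)
include hq hq0

/-- Pascal rule, variant A. -/
lemma pascalA (m : ℕ) (k : ℤ) :
    gb q (m + 1) k = gb q m k + q ^ (2 * ((m : ℤ) + 1 - k)) * gb q m (k - 1) := by
  rcases lt_trichotomy k 0 with hk | rfl | hk
  · rw [gb_of_neg q _ hk, gb_of_neg q _ hk, gb_of_neg q _ (by omega)]
    ring
  · rw [gb_zero hq, gb_zero hq, gb_of_neg q _ (by omega)]
    ring
  rcases lt_trichotomy ((m : ℤ) + 1) k with hk2 | rfl | hk2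
  · rw [gb_of_gt q _ (by omega), gb_of_gt q _ (by omega), gb_of_gt q _ (by omega)]
    ring
  · have hc : (m:ℤ) + 1 = ((m+1:ℕ) : ℤ) := by push_cast; ring
    rw [hc, gb_self hq, gb_of_gt q m (by omega),
      show ((m+1:ℕ):ℤ) - 1 = ((m:ℕ):ℤ) by push_cast; ring, gb_self hq]
    simp
  -- main case : 1 ≤ k ≤ m
  obtain ⟨c, hc⟩ : ∃ c : ℕ, k.toNat = c + 1 := ⟨k.toNat - 1, by omega⟩
  obtain ⟨b, hb⟩ : ∃ b : ℕ, m = c + 1 + b := ⟨m - (c+1), by omega⟩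
  have hkc : k = (c : ℤ) + 1 := by omega
  have h1 : (m + 1 : ℕ) - k.toNat = b + 1 := by omega
  have h2 : m - k.toNat = b := by omega
  have h3 : (k - 1).toNat = c := by omega
  have h4 : m - (k-1).toNat = b + 1 := by omega
  have h5 : 2 * ((m : ℤ) + 1 - k) = ((2 * b + 2 : ℕ) : ℤ) := by push_cast [hb, hkc]; ring
  rw [gb, gb, gb, if_pos (by omega), if_pos (by omega), if_pos (by omega), h1, h2, h4, h3, h5,
    zpow_natCast, hc, hb]
  have e1 : qp q (c + 1 + b + 1) = qp q (c + 1 + b) * (1 - q ^ (2 * (c + 1 + b) + 2)) :=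
    qp_succ q _
  have e2 : qp q (c + 1) = qp q c * (1 - q ^ (2 * c + 2)) := qp_succ q _
  have e3 : qp q (b + 1) = qp q b * (1 - q ^ (2 * b + 2)) := qp_succ q _
  rw [e1, e2, e3]
  have n1 : qp q c ≠ 0 := qp_ne_zero hq c
  have n2 : qp q b ≠ 0 := qp_ne_zero hq b
  have n3 : (1 : ℂ) - q ^ (2 * c + 2) ≠ 0 := one_sub_pow_ne hq _ (by omega)
  have n4 : (1 : ℂ) - q ^ (2 * b + 2) ≠ 0 := one_sub_pow_ne hq _ (by omega)
  field_simp
  ring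

/-- Pascal rule, variant B. -/
lemma pascalB (m : ℕ) (k : ℤ) :
    gb q (m + 1) k = q ^ (2 * k) * gb q m k + gb q m (k - 1) := by
  rcases lt_trichotomy k 0 with hk | rfl | hk
  · rw [gb_of_neg q _ hk, gb_of_neg q _ hk, gb_of_neg q _ (by omega)]
    ring
  · rw [gb_zero hq, gb_zero hq, gb_of_neg q _ (by omega)]
    simp
  rcases lt_trichotomy ((m : ℤ) + 1) k with hk2 | rfl | hk2
  · rw [gb_of_gt q _ (by omega), gb_of_gt q _ (by omega), gb_of_gt q _ (by omega)]
    ring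
  · have hc : (m:ℤ) + 1 = ((m+1:ℕ) : ℤ) := by push_cast; ring
    rw [hc, gb_self hq, gb_of_gt q m (by omega),
      show ((m+1:ℕ):ℤ) - 1 = ((m:ℕ):ℤ) by push_cast; ring, gb_self hq]
    simp
  obtain ⟨c, hc⟩ : ∃ c : ℕ, k.toNat = c + 1 := ⟨k.toNat - 1, by omega⟩
  obtain ⟨b, hb⟩ : ∃ b : ℕ, m = c + 1 + b := ⟨m - (c+1), by omega⟩
  have hkc : k = (c : ℤ) + 1 := by omega
  have h1 : (m + 1 : ℕ) - k.toNat = b + 1 := by omega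
  have h2 : m - k.toNat = b := by omega
  have h3 : (k - 1).toNat = c := by omega
  have h4 : m - (k-1).toNat = b + 1 := by omega
  have h5 : 2 * k = ((2 * c + 2 : ℕ) : ℤ) := by push_cast [hkc]; ring
  rw [gb, gb, gb, if_pos (by omega), if_pos (by omega), if_pos (by omega), h1, h2, h4, h3, h5,
    zpow_natCast, hc, hb]
  have e1 : qp q (c + 1 + b + 1) = qp q (c + 1 + b) * (1 - q ^ (2 * (c + 1 + b) + 2)) :=
    qp_succ q _
  have e2 : qp q (c + 1) = qp q c * (1 - q ^ (2 * c + 2)) := qp_succ q _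
  have e3 : qp q (b + 1) = qp q b * (1 - q ^ (2 * b + 2)) := qp_succ q _
  rw [e1, e2, e3]
  have n1 : qp q c ≠ 0 := qp_ne_zero hq c
  have n2 : qp q b ≠ 0 := qp_ne_zero hq b
  have n3 : (1 : ℂ) - q ^ (2 * c + 2) ≠ 0 := one_sub_pow_ne hq _ (by omega)
  have n4 : (1 : ℂ) - q ^ (2 * b + 2) ≠ 0 := one_sub_pow_ne hq _ (by omega)
  field_simp
  ring

/-- Two-step recurrence for Gaussian binomials. -/
lemma gb_rec (m : ℕ) (k : ℤ) :
    gb q (m + 2) k = q ^ (2 * k) * gb q m k + (1 + q ^ (2 * (m + 1))) * gb q m (k - 1)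
      + q ^ (2 * ((m : ℤ) + 2 - k)) * gb q m (k - 2) := by
  have h1 : gb q (m + 2) k = q ^ (2 * k) * gb q (m+1) k + gb q (m+1) (k - 1) := pascalB hq hq0 _ _
  rw [h1, pascalA hq hq0 m k, pascalA hq hq0 m (k-1)]
  have e1 : (m : ℤ) + 1 - (k - 1) = (m : ℤ) + 2 - k := by ring
  have e2 : k - 1 - 1 = k - 2 := by ring
  rw [e1, e2]
  have e3 : q ^ (2 * k) * (q ^ (2 * ((m:ℤ) + 1 - k))) = q ^ (2 * ((m:ℤ) + 1)) := by
    rw [← zpow_add₀ hq0]; ring_nf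
  have hmm : (2 : ℤ) * ((m:ℤ)+1) = 2*(m+1) := by push_cast; ring
  calc q ^ (2 * k) * (gb q m k + q ^ (2 * ((m:ℤ) + 1 - k)) * gb q m (k - 1))
        + (gb q m (k - 1) + q ^ (2 * ((m:ℤ) + 2 - k)) * gb q m (k - 2))
      = q ^ (2 * k) * gb q m k
        + (1 + q ^ (2 * k) * q ^ (2 * ((m:ℤ) + 1 - k))) * gb q m (k - 1)
        + q ^ (2 * ((m:ℤ) + 2 - k)) * gb q m (k - 2) := by ring
    _ = _ := by
        rw [e3, show (2*((m:ℤ)+1)) = ((2*(m+1):ℕ):ℤ) by push_cast; ring, zpow_natCast]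

end B

section C
/-- finite product `∏_{j=0}^{N-1} (1+q^{2j+1}w)(1+q^{2j+1}w⁻¹)`. -/
noncomputable def fprod (q w : ℂ) (N : ℕ) : ℂ :=
  ∏ j ∈ Finset.range N, ((1 + q ^ (2 * j + 1) * w) * (1 + q ^ (2 * j + 1) * w⁻¹))

/-- finite sum `∑_{k=0}^{2N} [2N,k] q^{(k-N)²} w^{k-N}`. -/
noncomputable def fsum (q w : ℂ) (N : ℕ) : ℂ :=
  ∑ k ∈ Finset.Icc (0 : ℤ) (2 * (N : ℤ)),
    gb q (2 * N) k * q ^ ((k - (N : ℤ)) ^ 2) * w ^ (k - (N : ℤ))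

lemma sum_Icc_shift (f : ℤ → ℂ) (a b c : ℤ) :
    ∑ k ∈ Finset.Icc a b, f k = ∑ k ∈ Finset.Icc (a - c) (b - c), f (c + k) := by
  have h : Finset.Icc a b = Finset.map (addLeftEmbedding c) (Finset.Icc (a - c) (b - c)) := by
    rw [Finset.map_add_left_Icc]; congr 1 <;> ring
  rw [h, Finset.sum_map]
  simp [addLeftEmbedding]

variable {q w : ℂ} (hq : ‖q‖ < 1) (hq0 : q ≠ 0) (hw : w ≠ 0)
include hq hq0 hw

lemma fsum_succ (N : ℕ) :
    fsum q w (N + 1) =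
      ((1 + q ^ (2 * N + 1) * w) * (1 + q ^ (2 * N + 1) * w⁻¹)) * fsum q w N := by
  have h2N : (2 * ((N : ℤ) + 1)) = (2 * (N:ℤ)) + 2 := by ring
  have hIcc : Finset.Icc (0:ℤ) (2 * ((N:ℤ)+1)) = Finset.Icc (0:ℤ) (2*(N:ℤ)+2) := by rw [h2N]
  have hsub : Finset.Icc (0:ℤ) (2*(N:ℤ)) ⊆ Finset.Icc (0:ℤ) (2*(N:ℤ)+2) :=
    Finset.Icc_subset_Icc le_rfl (by omega)
  -- the three term functions
  set X : ℤ → ℂ := fun k => q ^ ((k - ((N:ℤ)+1)) ^ 2) * w ^ (k - ((N:ℤ)+1)) with hX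
  have step1 : fsum q w (N+1) = ∑ k ∈ Finset.Icc (0:ℤ) (2*(N:ℤ)+2),
      (q ^ (2*k) * gb q (2*N) k * X k
       + (1 + q ^ (2*(2*N+1))) * gb q (2*N) (k-1) * X k
       + q ^ (2*((2*N:ℤ)+2-k)) * gb q (2*N) (k-2) * X k) := by
    rw [fsum]
    push_cast
    rw [hIcc]
    refine Finset.sum_congr rfl fun k hk => ?_
    rw [show 2*(N+1) = 2*N+2 from by ring, gb_rec hq hq0 (2*N) k]
    push_cast
    rw [hX]
    ring
  rw [step1]
  rw [Finset.sum_add_distrib, Finset.sum_add_distrib]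
  -- Sum A
  have hA : ∑ k ∈ Finset.Icc (0:ℤ) (2*(N:ℤ)+2), q ^ (2*k) * gb q (2*N) k * X k
      = (q ^ ((2*(N:ℤ)+1)) * w⁻¹) * fsum q w N := by
    rw [← Finset.sum_subset hsub (by
      intro k hk hk2
      simp only [Finset.mem_Icc] at hk hk2
      rw [gb_of_gt q (2*N) (by push_cast; omega)]
      ring)]
    rw [fsum, Finset.mul_sum]
    refine Finset.sum_congr rfl fun k hk => ?_
    simp only [Finset.mem_Icc] at hk
    rw [hX]
    have e1 : q ^ (2*k) * q ^ ((k - ((N:ℤ)+1))^2) = q ^ (2*(N:ℤ)+1) * q ^ ((k - (N:ℤ))^2) := by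
      rw [← zpow_add₀ hq0, ← zpow_add₀ hq0]
      congr 1
      ring
    have e2 : w ^ (k - ((N:ℤ)+1)) = w⁻¹ * w ^ (k - (N:ℤ)) := by
      rw [show k - ((N:ℤ)+1) = (k - (N:ℤ)) - 1 from by ring, zpow_sub_one₀ hw]
      ring
    calc q ^ (2*k) * gb q (2*N) k * (q ^ ((k - ((N:ℤ)+1))^2) * w ^ (k - ((N:ℤ)+1)))
        = (q ^ (2*k) * q ^ ((k - ((N:ℤ)+1))^2)) * gb q (2*N) k * w ^ (k - ((N:ℤ)+1)) := by ring
      _ = (q ^ (2*(N:ℤ)+1) * q ^ ((k - (N:ℤ))^2)) * gb q (2*N) k * (w⁻¹ * w ^ (k - (N:ℤ))) := by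
          rw [e1, e2]
      _ = q ^ (2*(N:ℤ)+1) * w⁻¹ * (gb q (2*N) k * q ^ ((k - (N:ℤ))^2) * w ^ (k - (N:ℤ))) := by
          ring
  -- Sum B
  have hB : ∑ k ∈ Finset.Icc (0:ℤ) (2*(N:ℤ)+2), (1 + q ^ (2*(2*N+1))) * gb q (2*N) (k-1) * X k
      = (1 + q ^ (2*(2*N+1))) * fsum q w N := by
    rw [sum_Icc_shift _ 0 (2*(N:ℤ)+2) 1]
    have hbnd : (0:ℤ) - 1 = -1 := by ring
    have hbnd2 : (2*(N:ℤ)+2) - 1 = 2*(N:ℤ)+1 := by ring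
    rw [hbnd, hbnd2]
    have hsub2 : Finset.Icc (0:ℤ) (2*(N:ℤ)) ⊆ Finset.Icc (-1:ℤ) (2*(N:ℤ)+1) :=
      Finset.Icc_subset_Icc (by omega) (by omega)
    rw [← Finset.sum_subset hsub2 (by
      intro k hk hk2
      simp only [Finset.mem_Icc] at hk hk2
      rcases lt_or_ge k 0 with h | h
      · rw [show 1 + k - 1 = k from by ring, gb_of_neg q (2*N) h]; ring
      · rw [show 1 + k - 1 = k from by ring, gb_of_gt q (2*N) (by push_cast; omega)]; ring)]
    rw [fsum, Finset.mul_sum]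
    refine Finset.sum_congr rfl fun k hk => ?_
    simp only [hX]
    rw [show (1:ℤ) + k - 1 = k from by ring,
      show 1 + k - ((N:ℤ)+1) = k - (N:ℤ) from by ring]
    ring
  -- Sum C
  have hC : ∑ k ∈ Finset.Icc (0:ℤ) (2*(N:ℤ)+2), q ^ (2*((2*N:ℤ)+2-k)) * gb q (2*N) (k-2) * X k
      = (q ^ ((2*(N:ℤ)+1)) * w) * fsum q w N := by
    rw [sum_Icc_shift _ 0 (2*(N:ℤ)+2) 2]
    have hbnd : (0:ℤ) - 2 = -2 := by ring
    have hbnd2 : (2*(N:ℤ)+2) - 2 = 2*(N:ℤ) := by ring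
    rw [hbnd, hbnd2]
    have hsub3 : Finset.Icc (0:ℤ) (2*(N:ℤ)) ⊆ Finset.Icc (-2:ℤ) (2*(N:ℤ)) :=
      Finset.Icc_subset_Icc (by omega) le_rfl
    rw [← Finset.sum_subset hsub3 (by
      intro k hk hk2
      simp only [Finset.mem_Icc] at hk hk2
      rw [show 2 + k - 2 = k from by ring, gb_of_neg q (2*N) (by omega)]
      ring)]
    rw [fsum, Finset.mul_sum]
    refine Finset.sum_congr rfl fun k hk => ?_
    simp only [Finset.mem_Icc] at hk
    rw [hX, show 2 + k - 2 = k from by ring]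
    have e1 : q ^ (2*((2*N:ℤ)+2-(2+k))) * q ^ ((2 + k - ((N:ℤ)+1))^2)
        = q ^ (2*(N:ℤ)+1) * q ^ ((k - (N:ℤ))^2) := by
      rw [← zpow_add₀ hq0, ← zpow_add₀ hq0]
      congr 1
      ring
    have e2 : w ^ (2 + k - ((N:ℤ)+1)) = w * w ^ (k - (N:ℤ)) := by
      rw [show 2 + k - ((N:ℤ)+1) = (k - (N:ℤ)) + 1 from by ring, zpow_add_one₀ hw]
      ring
    calc q ^ (2*((2*N:ℤ)+2-(2+k))) * gb q (2*N) k
          * (q ^ ((2 + k - ((N:ℤ)+1))^2) * w ^ (2 + k - ((N:ℤ)+1)))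
        = (q ^ (2*((2*N:ℤ)+2-(2+k))) * q ^ ((2 + k - ((N:ℤ)+1))^2)) * gb q (2*N) k
          * w ^ (2 + k - ((N:ℤ)+1)) := by ring
      _ = (q ^ (2*(N:ℤ)+1) * q ^ ((k - (N:ℤ))^2)) * gb q (2*N) k * (w * w ^ (k - (N:ℤ))) := by
          rw [e1, e2]
      _ = q ^ (2*(N:ℤ)+1) * w * (gb q (2*N) k * q ^ ((k - (N:ℤ))^2) * w ^ (k - (N:ℤ))) := by
          ring
  rw [hA, hB, hC]
  -- now pure algebra
  have hzp : q ^ ((2*(N:ℤ)+1)) = q ^ (2*N+1 : ℕ) := by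
    rw [show (2*(N:ℤ)+1) = ((2*N+1 : ℕ) : ℤ) from by push_cast; ring, zpow_natCast]
  have hzp2 : q ^ (2*(2*N+1) : ℕ) = q ^ (2*N+1 : ℕ) * q ^ (2*N+1 : ℕ) := by
    rw [← pow_add]
    congr 1
    ring
  rw [hzp, hzp2]
  field_simp
  ring

lemma fprod_eq_fsum (N : ℕ) : fprod q w N = fsum q w N := by
  induction N with
  | zero =>
    simp [fprod, fsum]
    rw [gb_zero hq]
  | succ N ih =>
    rw [fsum_succ hq hq0 hw, ← ih, fprod, Finset.prod_range_succ, ← fprod]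
    ring

end C

section bounds
variable {q : ℂ} (hq : ‖q‖ < 1)

/-- `exp(-x/(1-ρ)) ≤ 1 - x` for `0 ≤ x ≤ ρ < 1`. -/
lemma exp_le_one_sub {ρ x : ℝ} (hρ : ρ < 1) (hx : 0 ≤ x) (hxρ : x ≤ ρ) :
    Real.exp (-(x / (1 - ρ))) ≤ 1 - x := by
  have h1ρ : (0:ℝ) < 1 - ρ := by linarith
  have h0 : 0 ≤ x / (1 - ρ) := div_nonneg hx h1ρ.le
  have h1 : 1 + x / (1 - ρ) ≤ Real.exp (x / (1 - ρ)) := by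
    have := Real.add_one_le_exp (x / (1 - ρ)); linarith
  have h2 : Real.exp (-(x / (1 - ρ))) = (Real.exp (x / (1 - ρ)))⁻¹ := Real.exp_neg _
  rw [h2]
  have h3 : (Real.exp (x / (1 - ρ)))⁻¹ ≤ (1 + x / (1 - ρ))⁻¹ := by
    apply inv_anti₀ (by linarith) h1
  refine h3.trans ?_
  rw [inv_le_iff_one_le_mul₀ (by linarith)]
  have hxx : x * (x / (1 - ρ)) ≥ x * x / (1-ρ) := by rw [mul_div_assoc]
  have expand : (1 - x) * (1 + x / (1 - ρ)) = 1 + x / (1-ρ) - x - x * (x/(1-ρ)) := by ring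
  rw [expand]
  have key : x ≤ x / (1 - ρ) - x * (x / (1-ρ)) := by
    have e : x / (1 - ρ) - x * (x / (1-ρ)) = x * (1 - x) / (1 - ρ) := by ring
    rw [e, le_div_iff₀ h1ρ]
    nlinarith [mul_le_mul_of_nonneg_left hxρ hx]
  linarith

include hq

lemma rho_lt : ‖q‖ ^ 2 < 1 := by
  have h0 : 0 ≤ ‖q‖ := norm_nonneg q
  nlinarith

omit hq in
lemma norm_pow_eq (i : ℕ) : ‖q ^ (2 * i + 2)‖ = (‖q‖ ^ 2) ^ (i + 1) := by
  rw [show 2 * i + 2 = 2 * (i + 1) from by ring, norm_pow, pow_mul]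

lemma sum_rho_le (k : ℕ) :
    ∑ i ∈ Finset.range k, (‖q‖ ^ 2) ^ (i + 1) ≤ ‖q‖ ^ 2 / (1 - ‖q‖ ^ 2) := by
  have hρ1 : ‖q‖ ^ 2 < 1 := rho_lt hq
  have hρ0 : 0 ≤ ‖q‖ ^ 2 := sq_nonneg _
  have h1ρ : (0:ℝ) < 1 - ‖q‖ ^ 2 := by linarith
  have : ∑ i ∈ Finset.range k, (‖q‖ ^ 2) ^ (i + 1)
      = ‖q‖ ^ 2 * ∑ i ∈ Finset.range k, (‖q‖ ^ 2) ^ i := by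
    rw [Finset.mul_sum]
    exact Finset.sum_congr rfl fun i _ => by rw [pow_succ]; ring
  rw [this, div_eq_mul_inv]
  apply mul_le_mul_of_nonneg_left _ hρ0
  rw [geom_sum_eq hρ1.ne]
  have h2 : ((‖q‖^2) ^ k - 1) / (‖q‖^2 - 1) = (1 - (‖q‖^2)^k) * (1 - ‖q‖^2)⁻¹ := by
    rw [div_eq_mul_inv, show (‖q‖^2 - 1) = -(1 - ‖q‖^2) from by ring,
      show ((‖q‖^2)^k - 1) = -(1 - (‖q‖^2)^k) from by ring, inv_neg]
    ring
  rw [h2]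
  have h3 : (1 : ℝ) - (‖q‖^2)^k ≤ 1 := by
    have := pow_nonneg hρ0 k
    linarith
  calc (1 - (‖q‖^2)^k) * (1 - ‖q‖^2)⁻¹ ≤ 1 * (1 - ‖q‖^2)⁻¹ :=
        mul_le_mul_of_nonneg_right h3 (by positivity)
    _ = (1 - ‖q‖^2)⁻¹ := one_mul _

/-- uniform lower bound for `‖qp q k‖`. -/
lemma qp_norm_lower (k : ℕ) :
    Real.exp (-(‖q‖^2 / (1 - ‖q‖^2) / (1 - ‖q‖^2))) ≤ ‖qp q k‖ := by
  have hρ1 : ‖q‖ ^ 2 < 1 := rho_lt hq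
  have hρ0 : 0 ≤ ‖q‖ ^ 2 := sq_nonneg _
  have step1 : ∀ j : ℕ, Real.exp (-((∑ i ∈ Finset.range j, (‖q‖^2)^(i+1)) / (1 - ‖q‖^2)))
      ≤ ∏ i ∈ Finset.range j, (1 - (‖q‖^2)^(i+1)) := by
    intro j
    induction j with
    | zero => simp
    | succ j ih =>
      rw [Finset.sum_range_succ, Finset.prod_range_succ]
      have e1 : -((∑ i ∈ Finset.range j, (‖q‖^2)^(i+1) + (‖q‖^2)^(j+1)) / (1 - ‖q‖^2))
          = -((∑ i ∈ Finset.range j, (‖q‖^2)^(i+1)) / (1 - ‖q‖^2))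
            + -((‖q‖^2)^(j+1) / (1 - ‖q‖^2)) := by ring
      rw [e1, Real.exp_add]
      have hx0 : 0 ≤ (‖q‖^2)^(j+1) := pow_nonneg hρ0 _
      have hxρ : (‖q‖^2)^(j+1) ≤ ‖q‖^2 := by
        calc (‖q‖^2)^(j+1) ≤ (‖q‖^2)^1 := pow_le_pow_of_le_one hρ0 hρ1.le (by omega)
          _ = ‖q‖^2 := pow_one _
      have h2 := exp_le_one_sub hρ1 hx0 hxρ
      have hprodnn : (0:ℝ) ≤ ∏ i ∈ Finset.range j, (1 - (‖q‖^2)^(i+1)) := by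
        apply Finset.prod_nonneg
        intro i _
        have : (‖q‖^2)^(i+1) ≤ ‖q‖^2 := by
          calc (‖q‖^2)^(i+1) ≤ (‖q‖^2)^1 := pow_le_pow_of_le_one hρ0 hρ1.le (by omega)
            _ = ‖q‖^2 := pow_one _
        linarith
      exact mul_le_mul ih h2 (Real.exp_nonneg _) hprodnn
  have step2 : ∏ i ∈ Finset.range k, (1 - (‖q‖^2)^(i+1)) ≤ ‖qp q k‖ := by
    rw [qp, norm_prod]
    apply Finset.prod_le_prod
    · intro i _
      have : (‖q‖^2)^(i+1) ≤ ‖q‖^2 :=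
        calc (‖q‖^2)^(i+1) ≤ (‖q‖^2)^1 := pow_le_pow_of_le_one hρ0 hρ1.le (by omega)
          _ = ‖q‖^2 := pow_one _
      linarith
    · intro i _
      calc 1 - (‖q‖^2)^(i+1) = 1 - ‖q ^ (2*i+2)‖ := by rw [norm_pow_eq]
        _ = ‖(1:ℂ)‖ - ‖q ^ (2*i+2)‖ := by simp
        _ ≤ ‖(1:ℂ) - q ^ (2*i+2)‖ := norm_sub_norm_le _ _
  refine le_trans ?_ (le_trans (step1 k) step2)
  rw [Real.exp_le_exp, neg_le_neg_iff, div_le_div_iff_of_pos_right (by linarith [rho_lt hq])]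
  exact sum_rho_le hq k

/-- uniform upper bound for `‖qp q k‖`. -/
lemma qp_norm_upper (k : ℕ) :
    ‖qp q k‖ ≤ Real.exp (‖q‖^2 / (1 - ‖q‖^2)) := by
  have hρ1 : ‖q‖ ^ 2 < 1 := rho_lt hq
  have hρ0 : 0 ≤ ‖q‖ ^ 2 := sq_nonneg _
  have step1 : ‖qp q k‖ ≤ ∏ i ∈ Finset.range k, (1 + (‖q‖^2)^(i+1)) := by
    rw [qp, norm_prod]
    apply Finset.prod_le_prod
    · intro i _; exact norm_nonneg _
    · intro i _
      calc ‖(1:ℂ) - q^(2*i+2)‖ ≤ ‖(1:ℂ)‖ + ‖q^(2*i+2)‖ := norm_sub_le _ _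
        _ = 1 + (‖q‖^2)^(i+1) := by rw [norm_pow_eq]; simp
  have step2 : ∏ i ∈ Finset.range k, (1 + (‖q‖^2)^(i+1))
      ≤ Real.exp (∑ i ∈ Finset.range k, (‖q‖^2)^(i+1)) := by
    rw [Real.exp_sum]
    apply Finset.prod_le_prod
    · intro i _
      have := pow_nonneg hρ0 (i+1)
      linarith
    · intro i _
      have := Real.add_one_le_exp ((‖q‖^2)^(i+1))
      linarith
  refine (step1.trans step2).trans ?_
  rw [Real.exp_le_exp]
  exact sum_rho_le hq k

lemma qp_norm_pos : 0 < Real.exp (-(‖q‖^2 / (1 - ‖q‖^2) / (1 - ‖q‖^2))) := Real.exp_pos _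

/-- uniform bound for Gaussian binomial coefficients. -/
lemma gb_norm_le (m : ℕ) (k : ℤ) :
    ‖gb q m k‖ ≤ Real.exp (‖q‖^2 / (1 - ‖q‖^2)) /
      (Real.exp (-(‖q‖^2 / (1 - ‖q‖^2) / (1 - ‖q‖^2)))
        * Real.exp (-(‖q‖^2 / (1 - ‖q‖^2) / (1 - ‖q‖^2)))) := by
  set cL := Real.exp (-(‖q‖^2 / (1 - ‖q‖^2) / (1 - ‖q‖^2))) with hcL
  set cU := Real.exp (‖q‖^2 / (1 - ‖q‖^2)) with hcU
  have hcL0 : 0 < cL := Real.exp_pos _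
  have hcU0 : 0 < cU := Real.exp_pos _
  rw [gb]
  split_ifs with h
  · rw [norm_div, norm_mul]
    apply div_le_div₀ (by positivity) (qp_norm_upper hq m) (by positivity)
    exact mul_le_mul (qp_norm_lower hq _) (qp_norm_lower hq _) hcL0.le
      (le_trans hcL0.le (qp_norm_lower hq _))
  · simp
    positivity
end bounds

section conv
variable {q : ℂ} (hq : ‖q‖ < 1)
include hq

lemma multipliable_qp : Multipliable (fun i : ℕ => 1 - q ^ (2 * i + 2)) := by
  have hρ1 : ‖q‖ ^ 2 < 1 := rho_lt hq
  have hρ0 : 0 ≤ ‖q‖ ^ 2 := sq_nonneg _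
  have hlog : Summable (fun i : ℕ => Complex.log (1 - q ^ (2 * i + 2))) := by
    apply Summable.of_norm_bounded_eventually_nat (g := fun i => 3/2 * ((‖q‖^2) * (‖q‖^2) ^ i))
    · have : Summable (fun i : ℕ => (3/2 * ‖q‖^2) * (‖q‖^2) ^ i) :=
        (summable_geometric_of_lt_one hρ0 hρ1).mul_left _
      exact this.congr fun i => by ring
    · have h0 : Tendsto (fun i : ℕ => (‖q‖^2) ^ i) atTop (𝓝 0) :=
        tendsto_pow_atTop_nhds_zero_of_lt_one hρ0 hρ1
      filter_upwards [h0.eventually (gt_mem_nhds (by norm_num : (0:ℝ) < 1/2))] with i hi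
      have hnorm : ‖-(q ^ (2*i+2))‖ = (‖q‖^2) * (‖q‖^2)^i := by
        rw [norm_neg, show 2*i+2 = 2*(i+1) from by ring, norm_pow, pow_mul, pow_succ]
        ring
      have hsmall : ‖-(q ^ (2*i+2))‖ ≤ 1/2 := by
        rw [hnorm]
        calc (‖q‖^2) * (‖q‖^2)^i ≤ 1 * (‖q‖^2)^i :=
              mul_le_mul_of_nonneg_right hρ1.le (pow_nonneg hρ0 i)
          _ = (‖q‖^2)^i := one_mul _
          _ ≤ 1/2 := hi.le
      have := Complex.norm_log_one_add_half_le_self hsmall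
      rw [show (1 : ℂ) + -(q ^ (2*i+2)) = 1 - q ^ (2*i+2) from by ring] at this
      calc ‖Complex.log (1 - q ^ (2*i+2))‖ ≤ 3/2 * ‖-(q ^ (2*i+2))‖ := this
        _ = 3/2 * ((‖q‖^2) * (‖q‖^2)^i) := by rw [hnorm]
  exact Complex.multipliable_of_summable_log hlog

lemma qp_tendsto : Tendsto (fun N => qp q N) atTop (𝓝 (∏' i : ℕ, (1 - q ^ (2 * i + 2)))) :=
  (multipliable_qp hq).hasProd.tendsto_prod_nat

lemma P_norm_lower : Real.exp (-(‖q‖^2 / (1 - ‖q‖^2) / (1 - ‖q‖^2)))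
    ≤ ‖∏' i : ℕ, (1 - q ^ (2 * i + 2))‖ :=
  ge_of_tendsto (qp_tendsto hq).norm (Eventually.of_forall fun N => qp_norm_lower hq N)

lemma P_ne_zero : (∏' i : ℕ, (1 - q ^ (2 * i + 2))) ≠ 0 := by
  intro h
  have := P_norm_lower hq
  rw [h, norm_zero] at this
  exact absurd this (not_le.2 (Real.exp_pos _))

lemma gb_tendsto_one (n : ℤ) :
    Tendsto (fun N : ℕ => qp q N * gb q (2*N) (n + N)) atTop (𝓝 1) := by
  set P := ∏' i : ℕ, (1 - q ^ (2 * i + 2)) with hP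
  have hP0 : P ≠ 0 := P_ne_zero hq
  have t1 : Tendsto (fun N : ℕ => 2*N) atTop atTop :=
    tendsto_atTop_atTop.2 fun b => ⟨b, fun N hN => by omega⟩
  have t2 : Tendsto (fun N : ℕ => ((n + N : ℤ)).toNat) atTop atTop :=
    tendsto_atTop_atTop.2 fun b => ⟨b + n.natAbs, fun N hN => by omega⟩
  have t3 : Tendsto (fun N : ℕ => 2*N - ((n + N : ℤ)).toNat) atTop atTop :=
    tendsto_atTop_atTop.2 fun b => ⟨b + n.natAbs + b, fun N hN => by omega⟩
  have h1 : Tendsto (fun N : ℕ => qp q N * qp q (2*N) /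
      (qp q ((n + N:ℤ)).toNat * qp q (2*N - ((n + N:ℤ)).toNat))) atTop
      (𝓝 (P * P / (P * P))) := by
    apply Tendsto.div
    · exact (qp_tendsto hq).mul ((qp_tendsto hq).comp t1)
    · exact ((qp_tendsto hq).comp t2).mul ((qp_tendsto hq).comp t3)
    · exact mul_ne_zero hP0 hP0
  have h2 : P * P / (P * P) = 1 := div_self (mul_ne_zero hP0 hP0)
  rw [h2] at h1
  apply h1.congr'
  filter_upwards [eventually_ge_atTop n.natAbs] with N hN
  have hcond : 0 ≤ n + (N:ℤ) ∧ n + (N:ℤ) ≤ ((2*N : ℕ) : ℤ) := by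
    constructor <;> [omega; (push_cast; omega)]
  rw [gb, if_pos hcond]
  have harg : (2*N : ℕ) - ((n + N:ℤ)).toNat = 2*N - ((n + N:ℤ)).toNat := rfl
  rw [mul_div_assoc]
end conv

section theta
variable {q w : ℂ} (hq : ‖q‖ < 1) (hq0 : q ≠ 0) (hw : w ≠ 0)

/-- The summand of the theta series. -/
noncomputable def th (q w : ℂ) (n : ℤ) : ℂ := q ^ (n ^ 2) * w ^ n

include hq in
lemma summable_norm_aux (v : ℂ) : Summable (fun n : ℕ => ‖(q ^ (n^2) * v ^ n : ℂ)‖) := by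
  apply summable_of_ratio_norm_eventually_le (r := 1/2) (by norm_num)
  have h0 : Tendsto (fun n : ℕ => (‖q‖ * (‖q‖^2) ^ n) * ‖v‖) atTop (𝓝 (0 * ‖v‖)) := by
    apply Tendsto.mul_const
    rw [show (0:ℝ) = ‖q‖ * 0 from by ring]
    exact (tendsto_pow_atTop_nhds_zero_of_lt_one (sq_nonneg _)
      (by nlinarith [norm_nonneg q])).const_mul _
  rw [zero_mul] at h0
  filter_upwards [h0.eventually (gt_mem_nhds (by norm_num : (0:ℝ) < 1/2))] with n hn
  have e1 : ‖(q ^ ((n+1)^2) * v ^ (n+1) : ℂ)‖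
      = ((‖q‖ * (‖q‖^2) ^ n) * ‖v‖) * ‖(q ^ (n^2) * v ^ n : ℂ)‖ := by
    rw [norm_mul, norm_mul, norm_pow, norm_pow, norm_pow, norm_pow,
      show (n+1)^2 = n^2 + (2*n+1) from by ring, pow_add, pow_succ, ← pow_mul]
    ring
  rw [norm_norm, norm_norm, e1]
  apply mul_le_mul_of_nonneg_right hn.le (norm_nonneg _)

include hq hw in
lemma summable_norm_th : Summable (fun n : ℤ => ‖th q w n‖) := by
  apply Summable.of_nat_of_neg
  · apply (summable_norm_aux hq w).congr
    intro n
    rw [th, show ((n:ℤ)^2) = ((n^2 : ℕ) : ℤ) from by push_cast; ring, zpow_natCast,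
      zpow_natCast]
  · apply (summable_norm_aux hq w⁻¹).congr
    intro n
    rw [th, show ((-(n:ℤ))^2) = ((n^2 : ℕ) : ℤ) from by push_cast; ring, zpow_natCast,
      zpow_neg, zpow_natCast, ← inv_pow]

/-- The integrand of Tannery's theorem. -/
noncomputable def F (q w : ℂ) (N : ℕ) (n : ℤ) : ℂ :=
  qp q N * gb q (2*N) (n + N) * th q w n

include hq hq0 hw in
lemma tsum_F_eq (N : ℕ) : ∑' n : ℤ, F q w N n = qp q N * fsum q w N := by
  have hsupp : ∀ n : ℤ, n ∉ Finset.Icc (-(N:ℤ)) (N:ℤ) → F q w N n = 0 := by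
    intro n hn
    simp only [Finset.mem_Icc] at hn
    rcases lt_or_ge n (-(N:ℤ)) with h | h
    · rw [F, gb_of_neg q (2*N) (by omega)]; ring
    · rw [F, gb_of_gt q (2*N) (by push_cast; omega)]; ring
  rw [tsum_eq_sum hsupp, fsum, Finset.mul_sum]
  rw [sum_Icc_shift _ 0 (2*(N:ℤ)) (N:ℤ)]
  rw [show (0:ℤ) - (N:ℤ) = -(N:ℤ) from by ring, show 2*(N:ℤ) - (N:ℤ) = (N:ℤ) from by ring]
  refine Finset.sum_congr rfl fun n hn => ?_
  rw [F, th, show (N:ℤ) + n - (N:ℤ) = n from by ring, show (N:ℤ) + n = n + (N:ℤ) from by ring]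
  ring

include hq hq0 hw in
lemma tendsto_tsum_F :
    Tendsto (fun N => ∑' n : ℤ, F q w N n) atTop (𝓝 (∑' n : ℤ, th q w n)) := by
  set cU := Real.exp (‖q‖^2 / (1 - ‖q‖^2)) with hcU
  set cL := Real.exp (-(‖q‖^2 / (1 - ‖q‖^2) / (1 - ‖q‖^2))) with hcL
  apply tendsto_tsum_of_dominated_convergence
    (bound := fun n : ℤ => (cU * (cU / (cL * cL))) * ‖th q w n‖)
  · exact (summable_norm_th hq hw).mul_left _
  · intro n
    have h1 := (gb_tendsto_one hq n).mul_const (th q w n)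
    rw [one_mul] at h1
    apply h1.congr
    intro N
    rw [F]
  · apply Eventually.of_forall
    intro N n
    rw [F, norm_mul, norm_mul]
    apply mul_le_mul_of_nonneg_right _ (norm_nonneg _)
    exact mul_le_mul (qp_norm_upper hq N) (gb_norm_le hq _ _) (norm_nonneg _)
      (le_trans (norm_nonneg _) (qp_norm_upper hq N))
end theta


section G
variable {q w : ℂ} (hq : ‖q‖ < 1) (hq0 : q ≠ 0) (hw : w ≠ 0)
include hq hq0 hw

lemma main : ∏' m : ℕ, ((1 - q ^ (2*m+2)) * (1 + q ^ (2*m+1) * w) * (1 + q ^ (2*m+1) * w⁻¹))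
    = ∑' n : ℤ, th q w n := by
  set f : ℕ → ℂ :=
    fun m => (1 - q ^ (2*m+2)) * (1 + q ^ (2*m+1) * w) * (1 + q ^ (2*m+1) * w⁻¹) with hf
  have hpart : ∀ N, ∏ m ∈ Finset.range N, f m = ∑' n : ℤ, F q w N n := by
    intro N
    rw [tsum_F_eq hq hq0 hw, ← fprod_eq_fsum hq hq0 hw, qp, fprod, ← Finset.prod_mul_distrib]
    refine Finset.prod_congr rfl fun m _ => ?_
    rw [hf]
    ring
  have T : Tendsto (fun N => ∏ m ∈ Finset.range N, f m) atTop (𝓝 (∑' n : ℤ, th q w n)) :=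
    (tendsto_tsum_F hq hq0 hw).congr (fun N => (hpart N).symm)
  by_cases hzero : ∃ m, f m = 0
  · obtain ⟨m₀, hm₀⟩ := hzero
    have hprod0 : HasProd f 0 := by
      rw [HasProd]
      apply Tendsto.congr' _ tendsto_const_nhds
      filter_upwards [eventually_ge_atTop ({m₀} : Finset ℕ)] with s hs
      exact (Finset.prod_eq_zero (hs (Finset.mem_singleton_self m₀)) hm₀).symm
    have hS0 : (∑' n : ℤ, th q w n) = 0 := by
      have T0 : Tendsto (fun N => ∏ m ∈ Finset.range N, f m) atTop (𝓝 (0:ℂ)) := by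
        apply Tendsto.congr' _ tendsto_const_nhds
        filter_upwards [eventually_ge_atTop (m₀+1)] with N hN
        exact (Finset.prod_eq_zero (Finset.mem_range.2 (by omega)) hm₀).symm
      exact tendsto_nhds_unique T T0
    rw [hS0]
    exact hprod0.tprod_eq
  · push_neg at hzero
    have hq1 : (0:ℝ) ≤ ‖q‖ := norm_nonneg q
    set K : ℝ := 3 + 2*‖w‖ + 2*‖w⁻¹‖ with hK
    have hK0 : 0 ≤ K := by positivity
    have hbound : ∀ m : ℕ, ‖f m - 1‖ ≤ K * ‖q‖^m := by
      intro m
      have hww : w * w⁻¹ = 1 := mul_inv_cancel₀ hw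
      have e : f m - 1 = q^(2*m+1)*(w + w⁻¹ - q) + (q^(2*m+1))^2*(1 - q*w - q*w⁻¹)
          - (q^(2*m+1))^3*q := by
        rw [hf]
        simp only
        have expand : (1 - q ^ (2*m+2)) * (1 + q ^ (2*m+1) * w) * (1 + q ^ (2*m+1) * w⁻¹) - 1
            = q^(2*m+1)*(w + w⁻¹ - q) + (q^(2*m+1))^2*((w*w⁻¹) - q*w - q*w⁻¹)
              - (q^(2*m+1))^3*q*(w*w⁻¹) := by
          rw [show 2*m+2 = (2*m+1)+1 from by ring, pow_succ]
          ring
        rw [expand, hww]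
        ring
      have ha1 : ‖q^(2*m+1)‖ ≤ ‖q‖^m := by
        rw [norm_pow]
        exact pow_le_pow_of_le_one hq1 hq.le (by omega)
      have ha2 : ‖(q^(2*m+1))^2‖ ≤ ‖q‖^m := by
        rw [norm_pow, norm_pow, ← pow_mul]
        exact pow_le_pow_of_le_one hq1 hq.le (by omega)
      have ha3 : ‖(q^(2*m+1))^3‖ ≤ ‖q‖^m := by
        rw [norm_pow, norm_pow, ← pow_mul]
        exact pow_le_pow_of_le_one hq1 hq.le (by omega)
      have hX : ‖w + w⁻¹ - q‖ ≤ ‖w‖ + ‖w⁻¹‖ + 1 := by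
        calc ‖w + w⁻¹ - q‖ ≤ ‖w + w⁻¹‖ + ‖q‖ := norm_sub_le _ _
          _ ≤ (‖w‖ + ‖w⁻¹‖) + ‖q‖ := by gcongr; exact norm_add_le _ _
          _ ≤ ‖w‖ + ‖w⁻¹‖ + 1 := by linarith
      have hY : ‖(1:ℂ) - q*w - q*w⁻¹‖ ≤ 1 + ‖w‖ + ‖w⁻¹‖ := by
        calc ‖(1:ℂ) - q*w - q*w⁻¹‖ ≤ ‖(1:ℂ) - q*w‖ + ‖q*w⁻¹‖ := norm_sub_le _ _
          _ ≤ (‖(1:ℂ)‖ + ‖q*w‖) + ‖q*w⁻¹‖ := by gcongr; exact norm_sub_le _ _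
          _ = 1 + ‖q‖*‖w‖ + ‖q‖*‖w⁻¹‖ := by rw [norm_one, norm_mul, norm_mul]
          _ ≤ 1 + 1*‖w‖ + 1*‖w⁻¹‖ := by
              have h1 : ‖q‖*‖w‖ ≤ 1*‖w‖ := mul_le_mul_of_nonneg_right hq.le (norm_nonneg w)
              have h2 : ‖q‖*‖w⁻¹‖ ≤ 1*‖w⁻¹‖ := mul_le_mul_of_nonneg_right hq.le (norm_nonneg w⁻¹)
              linarith
          _ = 1 + ‖w‖ + ‖w⁻¹‖ := by ring
      have hpm : (0:ℝ) ≤ ‖q‖^m := pow_nonneg hq1 m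
      calc ‖f m - 1‖ = ‖q^(2*m+1)*(w + w⁻¹ - q) + (q^(2*m+1))^2*(1 - q*w - q*w⁻¹)
            - (q^(2*m+1))^3*q‖ := by rw [e]
        _ ≤ ‖q^(2*m+1)*(w + w⁻¹ - q) + (q^(2*m+1))^2*(1 - q*w - q*w⁻¹)‖
            + ‖(q^(2*m+1))^3*q‖ := norm_sub_le _ _
        _ ≤ (‖q^(2*m+1)*(w + w⁻¹ - q)‖ + ‖(q^(2*m+1))^2*(1 - q*w - q*w⁻¹)‖)
            + ‖(q^(2*m+1))^3*q‖ := by gcongr; exact norm_add_le _ _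
        _ = ‖q^(2*m+1)‖*‖w + w⁻¹ - q‖ + ‖(q^(2*m+1))^2‖*‖(1:ℂ) - q*w - q*w⁻¹‖
            + ‖(q^(2*m+1))^3‖*‖q‖ := by rw [norm_mul, norm_mul, norm_mul]
        _ ≤ ‖q‖^m*(‖w‖ + ‖w⁻¹‖ + 1) + ‖q‖^m*(1 + ‖w‖ + ‖w⁻¹‖) + ‖q‖^m*1 := by
            gcongr <;> first
              | exact ha1 | exact ha2 | exact ha3 | exact hX | exact hY | exact hq.le
              | positivity
        _ = K * ‖q‖^m := by rw [hK]; ring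
    have hlog : Summable (fun m => Complex.log (f m)) := by
      apply Summable.of_norm_bounded_eventually_nat (g := fun m => 3/2 * (K * ‖q‖^m))
      · have : Summable (fun m : ℕ => (3/2 * K) * ‖q‖^m) :=
          (summable_geometric_of_lt_one hq1 hq).mul_left _
        exact this.congr fun m => by ring
      · have h0 : Tendsto (fun m : ℕ => K * ‖q‖^m) atTop (𝓝 (K * 0)) :=
          (tendsto_pow_atTop_nhds_zero_of_lt_one hq1 hq).const_mul K
        rw [mul_zero] at h0
        have hev : ∀ᶠ m in atTop, K * ‖q‖^m ≤ 1/2 :=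
          h0.eventually_le_const (by norm_num : (0:ℝ) < 1/2)
        filter_upwards [hev] with m hm
        have h1 : ‖f m - 1‖ ≤ 1/2 := le_trans (hbound m) hm
        have h2 := Complex.norm_log_one_add_half_le_self h1
        rw [show (1:ℂ) + (f m - 1) = f m from by ring] at h2
        calc ‖Complex.log (f m)‖ ≤ 3/2*‖f m - 1‖ := h2
          _ ≤ 3/2 * (K * ‖q‖^m) :=
              mul_le_mul_of_nonneg_left (hbound m) (by norm_num : (0:ℝ) ≤ 3/2)
    have hmul : Multipliable f :=
      Complex.multipliable_of_summable_log hlog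
    exact tendsto_nhds_unique hmul.hasProd.tendsto_prod_nat T

end G

end JTP


/-- The Jacobi triple product identity: for `0 < ‖q‖ < 1` and `z ≠ 0`,
`∏_{m=1}^∞ (1 - q^{2m})(1 + q^{2m-1} z²)(1 + q^{2m-1} z^{-2}) = ∑_{n ∈ ℤ} q^{n²} z^{2n}`. -/
theorem jacobi_triple_product (q z : ℂ) (hq0 : 0 < ‖q‖) (hq : ‖q‖ < 1) (hz : z ≠ 0) :
    ∏' m : ℕ, ((1 - q ^ (2 * (m + 1))) * (1 + q ^ (2 * (m + 1) - 1) * z ^ (2 : ℤ)) *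
        (1 + q ^ (2 * (m + 1) - 1) * z ^ (-2 : ℤ))) =
      ∑' n : ℤ, q ^ (n ^ 2).toNat * z ^ (2 * n) := by
  have hq0' : q ≠ 0 := by
    intro h
    rw [h, norm_zero] at hq0
    exact lt_irrefl _ hq0
  have hw : z ^ (2:ℤ) ≠ 0 := zpow_ne_zero _ hz
  calc ∏' m : ℕ, ((1 - q ^ (2 * (m + 1))) * (1 + q ^ (2 * (m + 1) - 1) * z ^ (2 : ℤ)) *
        (1 + q ^ (2 * (m + 1) - 1) * z ^ (-2 : ℤ)))
      = ∏' m : ℕ, ((1 - q ^ (2*m+2)) * (1 + q ^ (2*m+1) * (z^(2:ℤ)))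
          * (1 + q ^ (2*m+1) * (z^(2:ℤ))⁻¹)) := by
        apply tprod_congr
        intro m
        rw [show 2*(m+1) = 2*m+2 from by ring, show 2*m+2-1 = 2*m+1 from by omega,
          show z^(-2:ℤ) = (z^(2:ℤ))⁻¹ from by rw [← zpow_neg]]
    _ = ∑' n : ℤ, JTP.th q (z^(2:ℤ)) n := JTP.main hq hq0' hw
    _ = ∑' n : ℤ, q ^ (n^2).toNat * z ^ (2*n) := by
        apply tsum_congr
        intro n
        rw [JTP.th]
        congr 1
        · rw [← zpow_natCast q, Int.toNat_of_nonneg (sq_nonneg n)]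
        · rw [← zpow_mul]
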